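/- Let G₁ = (V₁, E₁) and G₂ = (V₂, E₂) be two reaction graphs embedded in ℝ^d (finite simple directed graphs with vertex sets in ℝ^d and no isolated vertices). If both G₁ and G₂ are endotactic, then their union G₁ ∪ G₂ = (V₁ ∪ V₂, E₁ ∪ E₂) is endotactic. -/
import Mathlib


open Matrix Finset
open scoped Matrix Classical

abbrev Vec (d : ℕ) := Fin d → ℝ
abbrev Edge (d : ℕ) := Vec d × Vec d

/-- Sources of edges whose reaction vector is not orthogonal to `u`. -/
def srcU {d : ℕ} (E : Finset (Edge d)) (u : Vec d) : Set (Vec d) :=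
  {y | ∃ y', (y, y') ∈ E ∧ (y' - y) ⬝ᵥ u ≠ 0}

/-- `G` is `u`-endotactic: no `u`-endotacticity violating reaction. -/
def uEndotactic {d : ℕ} (E : Finset (Edge d)) (u : Vec d) : Prop :=
  ¬ ∃ y y', (y, y') ∈ E ∧ 0 < (y' - y) ⬝ᵥ u ∧ ∀ z ∈ srcU E u, z ⬝ᵥ u ≤ y ⬝ᵥ u

def Endotactic {d : ℕ} (E : Finset (Edge d)) : Prop := ∀ u : Vec d, uEndotactic E u

/-- Reachability by a directed path. -/
def Reach {d : ℕ} (E : Finset (Edge d)) : Vec d → Vec d → Prop :=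
  Relation.ReflTransGen (fun a b => (a, b) ∈ E)

def IsEig {d : ℕ} (A : Matrix (Fin d) (Fin d) ℝ) (μ : ℂ) : Prop :=
  ∃ v : Fin d → ℂ, v ≠ 0 ∧ (A.map Complex.ofReal).mulVec v = μ • v

/-- The union (joint) of two endotactic reaction graphs is endotactic. -/
theorem stmt4 {d : ℕ} (E₁ E₂ : Finset (Edge d))
    (hsimple₁ : ∀ e ∈ E₁, e.1 ≠ e.2) (hsimple₂ : ∀ e ∈ E₂, e.1 ≠ e.2)
    (h₁ : Endotactic E₁) (h₂ : Endotactic E₂) :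
    Endotactic (E₁ ∪ E₂) := by
  intro u
  rintro ⟨y, y', hmem, hpos, hmax⟩
  rcases Finset.mem_union.1 hmem with h | h
  · exact h₁ u ⟨y, y', h, hpos, fun z hz => hmax z (by
      obtain ⟨z', hz', hne⟩ := hz
      exact ⟨z', Finset.mem_union_left _ hz', hne⟩)⟩
  · exact h₂ u ⟨y, y', h, hpos, fun z hz => hmax z (by
      obtain ⟨z', hz', hne⟩ := hz
      exact ⟨z', Finset.mem_union_right _ hz', hne⟩)⟩
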